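/- Let 0 < ρ < 1 and c_n ≥ 0 for n ≥ 0. Suppose limsup_{n→∞} (c_n ρ^{-n}) = ∞ where c_n := n r_e^{2n} (Σ_{k=-n}^n |f_n^k|)², r_e > 0, ρ = r_e/r_0. Equivalently, if limsup_{n→∞} (r_e r_0)^{n/2} Σ_{k=-n}^n |f_n^k| = ∞, then taking δ = ρᵐ along a suitable sequence m → ∞, the quantity E_δ := Σ_n Σ_k δ n r_e^{2n}|f_n^k|²/(δ² + ρ^{2n}) satisfies limsup_{δ→0} E_δ = ∞. -/

import Mathlib

open Filter
open scoped ENNReal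

/-- If `limsup (r_e r_0)^{n/2} Σ_k |f_n^k| = ∞`, then taking `δ = ρ^m` along a suitable
sequence `m → ∞`, `E_δ = Σ_n Σ_k δ n r_e^{2n}|f_n^k|²/(δ² + ρ^{2n})` tends to infinity,
so `limsup_{δ→0} E_δ = ∞`. -/
theorem statement8 (re r0 : ℝ) (h1 : 0 < re) (h2 : re < r0)
    (ρ : ℝ) (hρ : ρ = re / r0)
    (f : ℕ → ℤ → ℝ)
    (E : ℝ → ℝ≥0∞)
    (hE : ∀ δ : ℝ, E δ = ∑' n : ℕ, ∑ k ∈ Finset.Icc (-(n : ℤ)) (n : ℤ),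
        ENNReal.ofReal (δ * (n : ℝ) * re ^ (2 * n) * (f n k) ^ 2 / (δ ^ 2 + ρ ^ (2 * n))))
    (hlim : ∀ M : ℝ, ∃ᶠ n : ℕ in atTop,
        M < Real.sqrt (re * r0) ^ n * ∑ k ∈ Finset.Icc (-(n : ℤ)) (n : ℤ), |f n k|) :
    ∃ m : ℕ → ℕ, StrictMono m ∧
      Tendsto (fun j => E (ρ ^ m j)) atTop (nhds ⊤) ∧
      limsup E (nhdsWithin (0 : ℝ) (Set.Ioi 0)) = ⊤ := by
  have hr0 : (0:ℝ) < r0 := h1.trans h2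
  have hρ0 : 0 < ρ := hρ ▸ div_pos h1 hr0
  have hρ1 : ρ < 1 := hρ ▸ (div_lt_one hr0).2 h2
  set S : ℕ → ℝ := fun n =>
    Real.sqrt (re * r0) ^ n * ∑ k ∈ Finset.Icc (-(n : ℤ)) (n : ℤ), |f n k| with hS
  -- key lower bound
  have key : ∀ m : ℕ, 1 ≤ m → ENNReal.ofReal (S m ^ 2 / 6) ≤ E (ρ ^ m) := by
    intro m hm
    rw [hE]
    refine le_trans ?_ (ENNReal.le_tsum m)
    have hre2 : (0:ℝ) < re * r0 := mul_pos h1 hr0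
    have hρm : (0:ℝ) < ρ ^ m := pow_pos hρ0 m
    have hρ2m : (ρ ^ m) ^ 2 + ρ ^ (2 * m) = 2 * ρ ^ (2 * m) := by
      rw [← pow_mul, mul_comm m 2]; ring
    -- each term: ρ^m * m * re^(2m) * f² / (2 ρ^(2m)) = (m/2) * (re*r0)^m * f²
    have hterm : ∀ k : ℤ,
        ρ ^ m * (m : ℝ) * re ^ (2 * m) * (f m k) ^ 2 / ((ρ ^ m) ^ 2 + ρ ^ (2 * m))
          = (m : ℝ) / 2 * (re * r0) ^ m * (f m k) ^ 2 := by
      intro k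
      rw [hρ2m, hρ, mul_pow re r0 m]
      rw [div_pow, div_pow]
      have hr0m : (0:ℝ) < r0 ^ m := pow_pos hr0 m
      have hr02m : (0:ℝ) < r0 ^ (2*m) := pow_pos hr0 (2*m)
      have hre2m : (0:ℝ) < re ^ (2*m) := pow_pos h1 (2*m)
      have h2m : re ^ (2*m) = re ^ m * re ^ m := by rw [← pow_add]; ring_nf
      have h2m' : r0 ^ (2*m) = r0 ^ m * r0 ^ m := by rw [← pow_add]; ring_nf
      field_simp
      rw [h2m']
      ring
    have hnonneg : ∀ k : ℤ, 0 ≤ (m : ℝ) / 2 * (re * r0) ^ m * (f m k) ^ 2 := by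
      intro k
      positivity
    calc ENNReal.ofReal (S m ^ 2 / 6)
        ≤ ENNReal.ofReal (∑ k ∈ Finset.Icc (-(m : ℤ)) (m : ℤ),
            (m : ℝ) / 2 * (re * r0) ^ m * (f m k) ^ 2) := by
          apply ENNReal.ofReal_le_ofReal
          have hcard : (Finset.Icc (-(m : ℤ)) (m : ℤ)).card = 2 * m + 1 := by
            rw [Int.card_Icc]; omega
          have hCS : (∑ k ∈ Finset.Icc (-(m : ℤ)) (m : ℤ), |f m k|) ^ 2
              ≤ (2 * m + 1 : ℝ) * ∑ k ∈ Finset.Icc (-(m : ℤ)) (m : ℤ), (f m k) ^ 2 := by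
            have := sq_sum_le_card_mul_sum_sq
              (s := Finset.Icc (-(m : ℤ)) (m : ℤ)) (f := fun k => |f m k|)
            simp only [sq_abs] at this
            rw [hcard] at this
            exact_mod_cast this
          have hSsq : S m ^ 2 = (re * r0) ^ m *
              (∑ k ∈ Finset.Icc (-(m : ℤ)) (m : ℤ), |f m k|) ^ 2 := by
            rw [hS]
            rw [mul_pow, ← pow_mul, mul_comm m 2, pow_mul, Real.sq_sqrt hre2.le]
          rw [hSsq, ← Finset.mul_sum]
          have h6 : (2 * (m:ℝ) + 1) / 6 ≤ (m:ℝ) / 2 := by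
            have : (1:ℝ) ≤ (m:ℝ) := by exact_mod_cast hm
            linarith
          have hpow : (0:ℝ) ≤ (re * r0) ^ m := (pow_pos hre2 m).le
          have hsum : (0:ℝ) ≤ ∑ k ∈ Finset.Icc (-(m : ℤ)) (m : ℤ), (f m k) ^ 2 :=
            Finset.sum_nonneg fun k _ => sq_nonneg _
          calc (re * r0) ^ m * (∑ k ∈ Finset.Icc (-(m : ℤ)) (m : ℤ), |f m k|) ^ 2 / 6
              ≤ (re * r0) ^ m * ((2 * m + 1 : ℝ)
                  * ∑ k ∈ Finset.Icc (-(m : ℤ)) (m : ℤ), (f m k) ^ 2) / 6 := by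
                apply div_le_div_of_nonneg_right _ (by norm_num)
                exact mul_le_mul_of_nonneg_left hCS hpow
            _ ≤ (m : ℝ) / 2 * ((re * r0) ^ m
                  * ∑ k ∈ Finset.Icc (-(m : ℤ)) (m : ℤ), (f m k) ^ 2) := by
                rw [div_le_iff₀ (by norm_num : (0:ℝ) < 6)]
                nlinarith [mul_nonneg hpow hsum]
            _ = (m : ℝ) / 2 * (re * r0) ^ m
                  * ∑ k ∈ Finset.Icc (-(m : ℤ)) (m : ℤ), (f m k) ^ 2 := by ring
      _ = ∑ k ∈ Finset.Icc (-(m : ℤ)) (m : ℤ),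
            ENNReal.ofReal ((m : ℝ) / 2 * (re * r0) ^ m * (f m k) ^ 2) := by
          rw [ENNReal.ofReal_sum_of_nonneg fun k _ => hnonneg k]
      _ = ∑ k ∈ Finset.Icc (-(m : ℤ)) (m : ℤ),
            ENNReal.ofReal (ρ ^ m * (m : ℝ) * re ^ (2 * m) * (f m k) ^ 2
              / ((ρ ^ m) ^ 2 + ρ ^ (2 * m))) := by
          exact Finset.sum_congr rfl fun k _ => by rw [hterm k]
  -- extract strictly monotone sequence
  obtain ⟨φ, hφmono, hφ⟩ := extraction_forall_of_frequently
    (P := fun j n => (j : ℝ) < S n ∧ 1 ≤ n)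
    (fun j => ((hlim j).and_eventually (eventually_ge_atTop 1)))
  refine ⟨φ, hφmono, ?_, ?_⟩
  · -- E (ρ ^ φ j) → ⊤
    have hlow : ∀ j : ℕ, ENNReal.ofReal ((j : ℝ) ^ 2 / 6) ≤ E (ρ ^ φ j) := by
      intro j
      refine le_trans ?_ (key (φ j) (hφ j).2)
      apply ENNReal.ofReal_le_ofReal
      have h1j : (j : ℝ) < S (φ j) := (hφ j).1
      have h0j : (0:ℝ) ≤ (j : ℝ) := Nat.cast_nonneg j
      have : (j : ℝ) ^ 2 ≤ S (φ j) ^ 2 := by nlinarith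
      linarith
    apply tendsto_nhds_top_mono _ (Filter.Eventually.of_forall hlow)
    apply ENNReal.tendsto_ofReal_atTop.comp
    apply Tendsto.atTop_div_const (by norm_num : (0:ℝ) < 6)
    exact (tendsto_pow_atTop (by norm_num : 2 ≠ 0)).comp tendsto_natCast_atTop_atTop
  · -- limsup = ⊤
    have hx : Tendsto (fun j => ρ ^ φ j) atTop (nhdsWithin (0 : ℝ) (Set.Ioi 0)) := by
      apply tendsto_nhdsWithin_of_tendsto_nhds_of_eventually_within
      · exact (tendsto_pow_atTop_nhds_zero_of_lt_one hρ0.le hρ1).comp hφmono.tendsto_atTop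
      · exact Filter.Eventually.of_forall fun j => pow_pos hρ0 _
    have htop : Tendsto (fun j => E (ρ ^ φ j)) atTop (nhds ⊤) := by
      have hlow : ∀ j : ℕ, ENNReal.ofReal ((j : ℝ) ^ 2 / 6) ≤ E (ρ ^ φ j) := by
        intro j
        refine le_trans ?_ (key (φ j) (hφ j).2)
        apply ENNReal.ofReal_le_ofReal
        have h1j : (j : ℝ) < S (φ j) := (hφ j).1
        have h0j : (0:ℝ) ≤ (j : ℝ) := Nat.cast_nonneg j
        have : (j : ℝ) ^ 2 ≤ S (φ j) ^ 2 := by nlinarith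
        linarith
      apply tendsto_nhds_top_mono _ (Filter.Eventually.of_forall hlow)
      apply ENNReal.tendsto_ofReal_atTop.comp
      apply Tendsto.atTop_div_const (by norm_num : (0:ℝ) < 6)
      exact (tendsto_pow_atTop (by norm_num : 2 ≠ 0)).comp tendsto_natCast_atTop_atTop
    have h1' : limsup (fun j => E (ρ ^ φ j)) atTop = ⊤ := htop.limsup_eq
    have h2' : limsup (fun j => E (ρ ^ φ j)) atTop
        ≤ limsup E (nhdsWithin (0 : ℝ) (Set.Ioi 0)) := by
      have : map (fun j => E (ρ ^ φ j)) atTop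
          ≤ map E (nhdsWithin (0 : ℝ) (Set.Ioi 0)) := by
        rw [show (fun j => E (ρ ^ φ j)) = E ∘ (fun j => ρ ^ φ j) from rfl, ← map_map]
        exact map_mono hx
      exact limsSup_le_limsSup_of_le this
    rw [eq_top_iff, ← h1']
    exact h2'
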